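/- Let M and M' be two finite multisets of bars, i.e. of half-open intervals [s, e) with starting point s ∈ ℝ and endpoint e ∈ ℝ ∪ {+∞} satisfying s < e. Suppose that for every s ∈ ℝ and every l ∈ ℝ, the number of bars in M with starting point equal to s that persist at level l (i.e. contain l) equals the corresponding number for M'. Then M = M'. (This is the paper's Barcode Recovery lemma: a barcode is recovered from the counts of bars with given starting points persisting at given levels.) -/

import Mathlib

open Classical

private lemma bc_count_top (M : Multiset (ℝ × WithTop ℝ)) (s L : ℝ) (hsL : s ≤ L)
    (hL : ∀ p ∈ M, ∀ r : ℝ, p.2 = (r : WithTop ℝ) → r ≤ L) :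
    M.count (s, (⊤ : WithTop ℝ))
      = (M.filter fun p => p.1 = s ∧ s ≤ L ∧ (L : WithTop ℝ) < p.2).card := by
  rw [Multiset.count_eq_card_filter_eq]
  congr 1
  apply Multiset.filter_congr
  intro p hp
  constructor
  · rintro rfl
    exact ⟨rfl, hsL, WithTop.coe_lt_top L⟩
  · rintro ⟨h1, -, h3⟩
    have : p.2 = ⊤ := by
      cases hp2 : p.2 with
      | top => rfl
      | coe r =>
        exfalso
        have := hL p hp r hp2
        rw [hp2] at h3
        exact absurd (WithTop.coe_lt_coe.mp h3) (not_lt.mpr this)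
    ext
    · exact h1.symm
    · exact this.symm

private lemma bc_count_coe (M : Multiset (ℝ × WithTop ℝ)) (s e l : ℝ) (hsl : s ≤ l)
    (hle : l < e)
    (hgap : ∀ p ∈ M, (l : WithTop ℝ) < p.2 → p.2 < (e : WithTop ℝ) → False) :
    (M.filter fun p => p.1 = s ∧ s ≤ l ∧ (l : WithTop ℝ) < p.2).card
      = M.count (s, (e : WithTop ℝ))
        + (M.filter fun p => p.1 = s ∧ s ≤ e ∧ (e : WithTop ℝ) < p.2).card := by
  classical
  set A := M.filter fun p => p.1 = s ∧ s ≤ l ∧ (l : WithTop ℝ) < p.2 with hA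
  have hsplit := Multiset.filter_add_not (fun p : ℝ × WithTop ℝ => (e : WithTop ℝ) < p.2) A
  have hcard : A.card = (A.filter fun p => (e : WithTop ℝ) < p.2).card
      + (A.filter fun p => ¬ (e : WithTop ℝ) < p.2).card := by
    rw [← Multiset.card_add, hsplit]
  have h1 : (A.filter fun p => (e : WithTop ℝ) < p.2)
      = M.filter fun p => p.1 = s ∧ s ≤ e ∧ (e : WithTop ℝ) < p.2 := by
    rw [hA, Multiset.filter_filter]
    apply Multiset.filter_congr
    intro p hp
    constructor
    · rintro ⟨he, ⟨h1, -, -⟩⟩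
      exact ⟨h1, le_of_lt (lt_of_le_of_lt hsl hle), he⟩
    · rintro ⟨h1, -, he⟩
      exact ⟨he, h1, hsl, lt_trans (WithTop.coe_lt_coe.mpr hle) he⟩
  have h2 : (A.filter fun p => ¬ (e : WithTop ℝ) < p.2)
      = M.filter fun p => (s, (e : WithTop ℝ)) = p := by
    rw [hA, Multiset.filter_filter]
    apply Multiset.filter_congr
    intro p hp
    constructor
    · rintro ⟨hne, ⟨h1, -, hl2⟩⟩
      have h2 : p.2 = (e : WithTop ℝ) := by
        rcases lt_trichotomy p.2 ((e : WithTop ℝ)) with h | h | h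
        · exact absurd (hgap p hp hl2 h) (fun f => f)
        · exact h
        · exact absurd h hne
      ext
      · exact h1.symm
      · exact h2.symm
    · rintro rfl
      refine ⟨lt_irrefl _, rfl, hsl, WithTop.coe_lt_coe.mpr hle⟩
  rw [Multiset.count_eq_card_filter_eq, ← h1, ← h2, hcard, add_comm]

/-- Barcode recovery: a finite multiset of bars `[s, e)` (with
`s ∈ ℝ`, `e ∈ ℝ ∪ {+∞}`, `s < e`) is determined by, for every starting point `s` and
level `l`, the number of bars starting at `s` that persist at level `l`. -/
theorem statement10 (M M' : Multiset (ℝ × WithTop ℝ))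
    (hM : ∀ p ∈ M, (p.1 : WithTop ℝ) < p.2)
    (hM' : ∀ p ∈ M', (p.1 : WithTop ℝ) < p.2)
    (hcount : ∀ s l : ℝ,
      (M.filter fun p => p.1 = s ∧ s ≤ l ∧ (l : WithTop ℝ) < p.2).card
        = (M'.filter fun p => p.1 = s ∧ s ≤ l ∧ (l : WithTop ℝ) < p.2).card) :
    M = M' := by
  classical
  ext a
  obtain ⟨s, e⟩ := a
  by_cases hse : (s : WithTop ℝ) < e
  · cases e with
    | top =>
      -- choose L above s and all finite endpoints
      set S : Finset ℝ := ((M + M').toFinset.image fun p => WithTop.untopD s p.2) ∪ {s} with hS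
      have hne : S.Nonempty := ⟨s, by simp [hS]⟩
      set L := S.max' hne with hLdef
      have hsL : s ≤ L := Finset.le_max' S s (by simp [hS])
      have hbound : ∀ p ∈ M + M', ∀ r : ℝ, p.2 = (r : WithTop ℝ) → r ≤ L := by
        intro p hp r hr
        apply Finset.le_max' S r
        rw [hS]
        apply Finset.mem_union_left
        apply Finset.mem_image.mpr
        exact ⟨p, Multiset.mem_toFinset.mpr hp, by rw [hr]; rfl⟩
      rw [bc_count_top M s L hsL (fun p hp => hbound p (Multiset.mem_add.mpr (Or.inl hp))),
        bc_count_top M' s L hsL (fun p hp => hbound p (Multiset.mem_add.mpr (Or.inr hp))),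
        hcount s L]
    | coe e =>
      have hse' : s < e := WithTop.coe_lt_coe.mp hse
      -- choose l in [s, e) with no endpoints of M + M' in (l, e)
      set S : Finset ℝ := (((M + M').toFinset.image fun p => WithTop.untopD s p.2).filter
        (fun r => s ≤ r ∧ r < e)) ∪ {s} with hS
      have hne : S.Nonempty := ⟨s, by simp [hS]⟩
      set l := S.max' hne with hldef
      have hsl : s ≤ l := Finset.le_max' S s (by simp [hS])
      have hle : l < e := by
        apply Finset.max'_lt_iff S hne |>.mpr
        intro y hy
        rw [hS] at hy
        rcases Finset.mem_union.mp hy with h | h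
        · exact (Finset.mem_filter.mp h).2.2
        · simpa using (Finset.mem_singleton.mp h) ▸ hse'
      have hgap : ∀ p ∈ M + M', (l : WithTop ℝ) < p.2 → p.2 < (e : WithTop ℝ) → False := by
        intro p hp h1 h2
        cases hp2 : p.2 with
        | top => rw [hp2] at h2; exact absurd h2 (by simp)
        | coe r =>
          rw [hp2] at h1 h2
          have hlr : l < r := WithTop.coe_lt_coe.mp h1
          have hre : r < e := WithTop.coe_lt_coe.mp h2
          have : r ≤ l := by
            apply Finset.le_max' S r
            rw [hS]
            apply Finset.mem_union_left
            apply Finset.mem_filter.mpr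
            refine ⟨Finset.mem_image.mpr ⟨p, Multiset.mem_toFinset.mpr hp, by rw [hp2]; rfl⟩,
              le_trans hsl (le_of_lt hlr), hre⟩
          exact absurd hlr (not_lt.mpr this)
      have key := hcount s l
      rw [bc_count_coe M s e l hsl hle
          (fun p hp => hgap p (Multiset.mem_add.mpr (Or.inl hp))),
        bc_count_coe M' s e l hsl hle
          (fun p hp => hgap p (Multiset.mem_add.mpr (Or.inr hp))),
        hcount s e] at key
      exact Nat.add_right_cancel key
  · rw [Multiset.count_eq_zero_of_notMem, Multiset.count_eq_zero_of_notMem]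
    · exact fun h => hse (hM' _ h)
    · exact fun h => hse (hM _ h)
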